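/- Let I = [x₁, x₂] ⊆ [0, y₂] be a closed interval and let f be a continuous real-valued function on the set {(x, y) ∈ I × [0, y₂] : y ≥ x} with f(x, y₂) = 0 and f(x, x) ≤ 1 for all x ∈ I, satisfying the Lipschitz bound |f(x, y) − f(x, z)| ≤ C(x)|y − z| for all x ∈ I and y, z ∈ [x, y₂], with C : I → [0, ∞) continuous. Then for every y₀ ∈ [x₂, y₂] there is a unique solution y(x) of y'(x) = f(x, y(x)) with final condition y(x₂) = y₀, defined on all of I, and this solution satisfies y(x) ∈ [x, y₂] for all x ∈ I. -/

import Mathlib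

open Set

lemma barrier_aux' {a b : ℝ} {h h' : ℝ → ℝ} (hab : a < b)
    (hcont : ContinuousOn h (Icc a b))
    (hder : ∀ x ∈ Ico a b, HasDerivWithinAt h (h' x) (Ici x) x)
    (hneg : h a < 0)
    (hkey : ∀ x ∈ Ico a b, h x < 0 → h' x ≤ 0) : h b < 0 := by
  set ε : ℝ := -h a / (2 * (b - a)) with hε
  have hba : 0 < b - a := by linarith
  have hε0 : 0 < ε := div_pos (by linarith) (by linarith)
  have heb : ε * (b - a) = -h a / 2 := by
    rw [hε, div_mul_eq_mul_div, div_eq_div_iff (by positivity) (by norm_num)]; ring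
  have key : ∀ ⦃x⦄, x ∈ Icc a b → h x ≤ h a + ε * (x - a) := by
    apply image_le_of_deriv_right_lt_deriv_boundary (B' := fun _ => ε) hcont hder (by simp)
    · intro x
      simpa using (((hasDerivAt_id x).sub_const a).const_mul ε).const_add (h a)
    · intro x hx hBx
      have h1 : ε * (x - a) ≤ ε * (b - a) := by
        have := hx.2
        nlinarith
      have hxneg : h x < 0 := by rw [hBx]; linarith
      exact lt_of_le_of_lt (hkey x hx hxneg) hε0
  have := key (right_mem_Icc.2 hab.le)
  linarith


/-- Existence and uniqueness for the backward ODE on the triangle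
`{(x, y) : x ∈ [x₁, x₂], x ≤ y ≤ y₂}`, with the solution staying above the
diagonal. -/
theorem stmt_9 (x₁ x₂ y₂ : ℝ) (hx : x₁ ≤ x₂) (h0 : 0 ≤ x₁) (hx₂ : x₂ ≤ y₂)
    (f : ℝ → ℝ → ℝ) (C : ℝ → ℝ)
    (hf : ContinuousOn (fun p : ℝ × ℝ => f p.1 p.2)
      {p : ℝ × ℝ | p.1 ∈ Icc x₁ x₂ ∧ p.2 ∈ Icc p.1 y₂})
    (hb : ∀ x ∈ Icc x₁ x₂, f x y₂ = 0)
    (hdiag : ∀ x ∈ Icc x₁ x₂, f x x ≤ 1)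
    (hC : ContinuousOn C (Icc x₁ x₂)) (hC0 : ∀ x ∈ Icc x₁ x₂, 0 ≤ C x)
    (hlip : ∀ x ∈ Icc x₁ x₂, ∀ y ∈ Icc x y₂, ∀ z ∈ Icc x y₂,
      |f x y - f x z| ≤ C x * |y - z|) :
    ∀ y₀ ∈ Icc x₂ y₂,
      (∃ y : ℝ → ℝ, y x₂ = y₀ ∧ (∀ x ∈ Icc x₁ x₂, y x ∈ Icc x y₂) ∧
        ∀ x ∈ Icc x₁ x₂, HasDerivWithinAt y (f x (y x)) (Icc x₁ x₂) x) ∧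
      (∀ y z : ℝ → ℝ, y x₂ = y₀ → z x₂ = y₀ →
        (∀ x ∈ Icc x₁ x₂, y x ∈ Icc x y₂) → (∀ x ∈ Icc x₁ x₂, z x ∈ Icc x y₂) →
        (∀ x ∈ Icc x₁ x₂, HasDerivWithinAt y (f x (y x)) (Icc x₁ x₂) x) →
        (∀ x ∈ Icc x₁ x₂, HasDerivWithinAt z (f x (z x)) (Icc x₁ x₂) x) →
        ∀ x ∈ Icc x₁ x₂, y x = z x) := by
  intro y₀ hy₀
  -- the triangle
  set T : Set (ℝ × ℝ) := {p : ℝ × ℝ | p.1 ∈ Icc x₁ x₂ ∧ p.2 ∈ Icc p.1 y₂} with hT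
  -- projections and the extended vector field
  set P : ℝ → ℝ := fun x => max x₁ (min x x₂) with hPdef
  set Q : ℝ → ℝ → ℝ := fun x y => max (P x) (min y y₂) with hQdef
  set F : ℝ → ℝ → ℝ := fun x y => f (P x) (Q x y) with hFdef
  have hPmem : ∀ x, P x ∈ Icc x₁ x₂ :=
    fun x => ⟨le_max_left _ _, max_le hx (min_le_right _ _)⟩
  have hPid : ∀ x ∈ Icc x₁ x₂, P x = x := by
    intro x hxm
    simp only [hPdef]
    rw [min_eq_left hxm.2, max_eq_right hxm.1]
  have hQmem : ∀ x y, Q x y ∈ Icc (P x) y₂ := by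
    intro x y
    exact ⟨le_max_left _ _, max_le ((hPmem x).2.trans hx₂) (min_le_right _ _)⟩
  have hTmem : ∀ x y, (P x, Q x y) ∈ T := fun x y => ⟨hPmem x, hQmem x y⟩
  have hQid : ∀ x ∈ Icc x₁ x₂, ∀ y ∈ Icc x y₂, Q x y = y := by
    intro x hxm y hym
    simp only [hQdef]
    rw [hPid x hxm, min_eq_left hym.2, max_eq_right hym.1]
  have hFf : ∀ x ∈ Icc x₁ x₂, ∀ y ∈ Icc x y₂, F x y = f x y := by
    intro x hxm y hym
    simp only [hFdef]
    rw [hPid x hxm, hQid x hxm y hym]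
  -- continuity of F
  have hPcont : Continuous P := by fun_prop
  have hφcont : Continuous (fun q : ℝ × ℝ => (P q.1, Q q.1 q.2)) := by
    apply Continuous.prodMk (hPcont.comp continuous_fst)
    exact ((hPcont.comp continuous_fst).max ((continuous_snd.min continuous_const)))
  have hFcont : Continuous (fun q : ℝ × ℝ => F q.1 q.2) :=
    hf.comp_continuous hφcont (fun q => hTmem q.1 q.2)
  -- Lipschitz constant
  obtain ⟨xm, hxmm, hxmax⟩ :=
    isCompact_Icc.exists_isMaxOn (nonempty_Icc.2 hx) hC
  set K : ℝ := max (C xm) 0 with hKdef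
  have hK0 : 0 ≤ K := le_max_right _ _
  have hCK : ∀ x ∈ Icc x₁ x₂, C x ≤ K := fun x hxm => (hxmax hxm).trans (le_max_left _ _)
  have hQlip : ∀ x y z, |Q x y - Q x z| ≤ |y - z| := by
    intro x y z
    calc |Q x y - Q x z| ≤ max |P x - P x| |min y y₂ - min z y₂| :=
          abs_max_sub_max_le_max _ _ _ _
      _ ≤ max |P x - P x| (max |y - z| |y₂ - y₂|) := by
          exact max_le_max le_rfl (abs_min_sub_min_le_max _ _ _ _)
      _ ≤ |y - z| := by simp [abs_nonneg]
  have hFlipR : ∀ x y z, |F x y - F x z| ≤ K * |y - z| := by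
    intro x y z
    calc |F x y - F x z| ≤ C (P x) * |Q x y - Q x z| :=
          hlip (P x) (hPmem x) (Q x y) (hQmem x y) (Q x z) (hQmem x z)
      _ ≤ K * |y - z| := by
          apply mul_le_mul (hCK _ (hPmem x)) (hQlip x y z) (abs_nonneg _) hK0
  have hFlip : ∀ t, LipschitzOnWith K.toNNReal (fun z => F t z) univ := by
    intro t
    apply LipschitzOnWith.of_dist_le_mul
    intro y _ z _
    rw [Real.dist_eq, Real.dist_eq]
    calc |F t y - F t z| ≤ K * |y - z| := hFlipR t y z
      _ = (K.toNNReal : ℝ) * |y - z| := by rw [Real.coe_toNNReal K hK0]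
  -- bound on F
  have hTcompact : IsCompact T := by
    have hclosed : IsClosed T := by
      have : T = ((Icc x₁ x₂).preimage Prod.fst) ∩ {p : ℝ × ℝ | p.1 ≤ p.2} ∩
          {p : ℝ × ℝ | p.2 ≤ y₂} := by
        ext p; simp [hT, mem_Icc, and_assoc]
      rw [this]
      exact ((isClosed_Icc.preimage continuous_fst).inter
        (isClosed_le continuous_fst continuous_snd)).inter
        (isClosed_le continuous_snd continuous_const)
    have hbdd : Bornology.IsBounded T := by
      have hsub : T ⊆ Icc x₁ x₂ ×ˢ Icc x₁ y₂ := by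
        rintro ⟨a, b⟩ ⟨ha, hb⟩
        exact ⟨ha, ⟨ha.1.trans hb.1, hb.2⟩⟩
      exact (isCompact_Icc.prod isCompact_Icc).isBounded.subset hsub
    exact Metric.isCompact_of_isClosed_isBounded hclosed hbdd
  obtain ⟨M₀, hM₀⟩ := hTcompact.exists_bound_of_continuousOn hf
  set M : ℝ := max M₀ 0 with hMdef
  have hM0 : 0 ≤ M := le_max_right _ _
  have hFM : ∀ x y, |F x y| ≤ M :=
    fun x y => ((hM₀ _ (hTmem x y)).trans (le_max_left _ _))
  -- Picard–Lindelöf existence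
  have hpl : IsPicardLindelof (fun t z => F t z) (⟨x₂, hx, le_rfl⟩ : Icc x₁ x₂) y₀
      (M * (x₂ - x₁)).toNNReal 0 M.toNNReal K.toNNReal := by
    constructor
    · intro t _
      exact (hFlip t).mono (subset_univ _)
    · intro z _
      exact (hFcont.comp (continuous_id.prodMk continuous_const)).continuousOn
    · intro t _ z _
      rw [Real.coe_toNNReal M hM0]
      exact hFM t z
    · simp only [NNReal.coe_zero, sub_zero, Real.coe_toNNReal M hM0,
        Real.coe_toNNReal _ (mul_nonneg hM0 (by linarith : (0:ℝ) ≤ x₂ - x₁))]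
      rw [sub_self, max_eq_right (by linarith : (0:ℝ) ≤ x₂ - x₁)]
  obtain ⟨g, hg0, hgd⟩ := hpl.exists_eq_forall_mem_Icc_hasDerivWithinAt₀
  have hgc : ContinuousOn g (Icc x₁ x₂) :=
    fun x hxm => (hgd x hxm).continuousWithinAt
  have hgr : ∀ x ∈ Ico x₁ x₂, HasDerivWithinAt g (F x (g x)) (Ici x) x := by
    intro x hxm
    exact (hgd x (Ico_subset_Icc_self hxm)).mono_of_mem_nhdsWithin (Icc_mem_nhdsGE_of_mem hxm)
  -- the solution stays below y₂
  have hA : ∀ x ∈ Icc x₁ x₂, g x ≤ y₂ := by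
    intro c hc
    by_contra hgt
    push_neg at hgt
    have hcx : c < x₂ := by
      rcases lt_or_eq_of_le hc.2 with h | h
      · exact h
      · rw [h, hg0] at hgt; exact absurd hy₀.2 (not_le.2 hgt)
    have := barrier_aux' (h := fun x => y₂ - g x) (h' := fun x => -(F x (g x))) hcx
      (continuousOn_const.sub (hgc.mono (Icc_subset_Icc hc.1 le_rfl)))
      (fun x hxm => ((hgr x ⟨hc.1.trans hxm.1, hxm.2⟩).const_sub y₂))
      (show y₂ - g c < 0 by linarith)
      ?_
    · have h2 : y₂ - g x₂ < 0 := this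
      rw [hg0] at h2; linarith [hy₀.2]
    · intro x hxm hneg
      have hneg' : y₂ - g x < 0 := hneg
      have hneg : y₂ < g x := by linarith
      have hFx : F x (g x) = 0 := by
        have h1 : min (g x) y₂ = y₂ := min_eq_right hneg.le
        have h2 : Q x (g x) = y₂ := by
          simp only [hQdef, h1]
          exact max_eq_right ((hPmem x).2.trans hx₂)
        simp only [hFdef, h2]
        exact hb _ (hPmem x)
      show -(F x (g x)) ≤ 0
      simp [hFx]
  -- the solution stays above the diagonal
  have hB : ∀ x ∈ Icc x₁ x₂, x ≤ g x := by
    intro c hc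
    by_contra hgt
    push_neg at hgt
    have hcx : c < x₂ := by
      rcases lt_or_eq_of_le hc.2 with h | h
      · exact h
      · rw [h, hg0] at hgt; exact absurd hy₀.1 (not_le.2 hgt)
    have := barrier_aux' (h := fun x => g x - x) (h' := fun x => F x (g x) - 1) hcx
      ((hgc.mono (Icc_subset_Icc hc.1 le_rfl)).sub continuousOn_id)
      (fun x hxm => ((hgr x ⟨hc.1.trans hxm.1, hxm.2⟩).sub (hasDerivWithinAt_id x _)))
      (show g c - c < 0 by linarith)
      ?_
    · have h2 : g x₂ - x₂ < 0 := this
      rw [hg0] at h2; linarith [hy₀.1]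
    · intro x hxm hneg
      have hneg' : g x - x < 0 := hneg
      have hxI : x ∈ Icc x₁ x₂ := ⟨hc.1.trans hxm.1, hxm.2.le⟩
      have hgx : g x < x := by linarith
      have hFx : F x (g x) = f x x := by
        have h1 : min (g x) y₂ = g x := min_eq_left (by linarith [hxI.2])
        have h2 : Q x (g x) = x := by
          simp only [hQdef, h1, hPid x hxI]
          exact max_eq_left hgx.le
        simp only [hFdef, h2, hPid x hxI]
      show F x (g x) - 1 ≤ 0
      rw [hFx]
      linarith [hdiag x hxI]
  have hmem : ∀ x ∈ Icc x₁ x₂, g x ∈ Icc x y₂ := fun x hxm => ⟨hB x hxm, hA x hxm⟩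
  constructor
  · -- existence
    refine ⟨g, hg0, hmem, fun x hxm => ?_⟩
    rw [← hFf x hxm (g x) (hmem x hxm)]
    exact hgd x hxm
  · -- uniqueness
    intro y z hy0 hz0 hymem hzmem hyd hzd
    have huniq : EqOn y z (Icc x₁ x₂) := by
      apply ODE_solution_unique_of_mem_Icc_left
        (v := fun t z => F t z) (s := fun _ => univ) (K := K.toNNReal) (fun t _ => hFlip t)
        (fun x hxm => (hyd x hxm).continuousWithinAt) ?_ (fun _ _ => mem_univ _)
        (fun x hxm => (hzd x hxm).continuousWithinAt) ?_ (fun _ _ => mem_univ _)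
        (hy0.trans hz0.symm)
      · intro t ht
        have := (hyd t (Ioc_subset_Icc_self ht)).mono_of_mem_nhdsWithin
          (Icc_mem_nhdsLE_of_mem ht)
        rwa [← hFf t (Ioc_subset_Icc_self ht) (y t) (hymem t (Ioc_subset_Icc_self ht))] at this
      · intro t ht
        have := (hzd t (Ioc_subset_Icc_self ht)).mono_of_mem_nhdsWithin
          (Icc_mem_nhdsLE_of_mem ht)
        rwa [← hFf t (Ioc_subset_Icc_self ht) (z t) (hzmem t (Ioc_subset_Icc_self ht))] at this
    exact fun x hxm => huniq hxm
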